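/- Let f : ℝⁿ → ℝ and G : ℝⁿ → S^m be twice continuously differentiable. Suppose (x,Λ) ∈ ℝⁿ × S^m is a KKT pair of (P1) which satisfies strict complementarity: rank G(x) + rank Λ = m. Then there exists Y ∈ Φ(Λ) (one may take Y to be the PSD square root of G(x)) such that (x,Y,Λ) is a KKT triple of (P2). -/

import Mathlib

open Matrix

noncomputable section

def jmul {m : ℕ} (A B : Matrix (Fin m) (Fin m) ℝ) : Matrix (Fin m) (Fin m) ℝ :=
  (1 / 2 : ℝ) • (A * B + B * A)

def minner {m : ℕ} (A B : Matrix (Fin m) (Fin m) ℝ) : ℝ :=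
  (A * B).trace

def memPhi {m : ℕ} (Λ Y : Matrix (Fin m) (Fin m) ℝ) : Prop :=
  ∀ W : Matrix (Fin m) (Fin m) ℝ, W.IsSymm → W ≠ 0 → jmul Y W = 0 →
    0 < minner (jmul W W) Λ

def pderivG {n m : ℕ} (G : (Fin n → ℝ) → Matrix (Fin m) (Fin m) ℝ)
    (x : Fin n → ℝ) (k : Fin n) : Matrix (Fin m) (Fin m) ℝ :=
  Matrix.of fun i j => fderiv ℝ (fun y => G y i j) x (Pi.single k 1)

def dirDerivG {n m : ℕ} (G : (Fin n → ℝ) → Matrix (Fin m) (Fin m) ℝ)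
    (x v : Fin n → ℝ) : Matrix (Fin m) (Fin m) ℝ :=
  ∑ k, v k • pderivG G x k

def adjDG {n m : ℕ} (G : (Fin n → ℝ) → Matrix (Fin m) (Fin m) ℝ)
    (x : Fin n → ℝ) (W : Matrix (Fin m) (Fin m) ℝ) : Fin n → ℝ :=
  fun k => minner (pderivG G x k) W

def gradf {n : ℕ} (f : (Fin n → ℝ) → ℝ) (x : Fin n → ℝ) : Fin n → ℝ :=
  fun k => fderiv ℝ f x (Pi.single k 1)

def KKT1 {n m : ℕ} (f : (Fin n → ℝ) → ℝ) (G : (Fin n → ℝ) → Matrix (Fin m) (Fin m) ℝ)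
    (x : Fin n → ℝ) (Λ : Matrix (Fin m) (Fin m) ℝ) : Prop :=
  gradf f x = adjDG G x Λ ∧ Λ.PosSemidef ∧ (G x).PosSemidef ∧ jmul Λ (G x) = 0

def KKT2 {n m : ℕ} (f : (Fin n → ℝ) → ℝ) (G : (Fin n → ℝ) → Matrix (Fin m) (Fin m) ℝ)
    (x : Fin n → ℝ) (Y Λ : Matrix (Fin m) (Fin m) ℝ) : Prop :=
  gradf f x = adjDG G x Λ ∧ jmul Λ Y = 0 ∧ G x = jmul Y Y

def hessQ {n m : ℕ} (f : (Fin n → ℝ) → ℝ) (G : (Fin n → ℝ) → Matrix (Fin m) (Fin m) ℝ)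
    (Λ : Matrix (Fin m) (Fin m) ℝ) (x v : Fin n → ℝ) : ℝ :=
  iteratedFDeriv ℝ 2 (fun y => f y - minner (G y) Λ) x ![v, v]

def SOSCNLP {n m : ℕ} (f : (Fin n → ℝ) → ℝ) (G : (Fin n → ℝ) → Matrix (Fin m) (Fin m) ℝ)
    (x : Fin n → ℝ) (Y Λ : Matrix (Fin m) (Fin m) ℝ) : Prop :=
  ∀ (v : Fin n → ℝ) (W : Matrix (Fin m) (Fin m) ℝ), W.IsSymm →
    ¬(v = 0 ∧ W = 0) → dirDerivG G x v = (2 : ℝ) • jmul Y W →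
    0 < hessQ f G Λ x v + 2 * minner (jmul W W) Λ

def SONCNLP {n m : ℕ} (f : (Fin n → ℝ) → ℝ) (G : (Fin n → ℝ) → Matrix (Fin m) (Fin m) ℝ)
    (x : Fin n → ℝ) (Y Λ : Matrix (Fin m) (Fin m) ℝ) : Prop :=
  ∀ (v : Fin n → ℝ) (W : Matrix (Fin m) (Fin m) ℝ), W.IsSymm →
    dirDerivG G x v = (2 : ℝ) • jmul Y W →
    0 ≤ hessQ f G Λ x v + 2 * minner (jmul W W) Λ

def LICQ {n m : ℕ} (G : (Fin n → ℝ) → Matrix (Fin m) (Fin m) ℝ)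
    (x : Fin n → ℝ) (Y : Matrix (Fin m) (Fin m) ℝ) : Prop :=
  ∀ W : Matrix (Fin m) (Fin m) ℝ, W.IsSymm → jmul Y W = 0 → adjDG G x W = 0 → W = 0

def Nondeg {n m : ℕ} (G : (Fin n → ℝ) → Matrix (Fin m) (Fin m) ℝ)
    (x : Fin n → ℝ) : Prop :=
  ∀ W : Matrix (Fin m) (Fin m) ℝ, W.IsSymm → G x * W = 0 → adjDG G x W = 0 → W = 0

def CritCone {n m : ℕ} (f : (Fin n → ℝ) → ℝ) (G : (Fin n → ℝ) → Matrix (Fin m) (Fin m) ℝ)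
    (x : Fin n → ℝ) : Set (Fin n → ℝ) :=
  {d | (∀ u : Fin m → ℝ, G x *ᵥ u = 0 → 0 ≤ u ⬝ᵥ (dirDerivG G x d *ᵥ u)) ∧
    gradf f x ⬝ᵥ d = 0}

def IsMPInv {m : ℕ} (A P : Matrix (Fin m) (Fin m) ℝ) : Prop :=
  A * P * A = A ∧ P * A * P = P ∧ (A * P)ᵀ = A * P ∧ (P * A)ᵀ = P * A

def Hmat {n m : ℕ} (G : (Fin n → ℝ) → Matrix (Fin m) (Fin m) ℝ)
    (x : Fin n → ℝ) (Λ P : Matrix (Fin m) (Fin m) ℝ) : Matrix (Fin n) (Fin n) ℝ :=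
  Matrix.of fun i j => 2 * (pderivG G x i * P * pderivG G x j * Λ).trace



lemma trace_tmul_nonneg {m : ℕ} (A : Matrix (Fin m) (Fin m) ℝ) :
    0 ≤ (Aᵀ * A).trace := by
  rw [Matrix.trace]
  refine Finset.sum_nonneg fun i _ => ?_
  simp only [Matrix.diag_apply, Matrix.mul_apply, Matrix.transpose_apply]
  exact Finset.sum_nonneg fun j _ => mul_self_nonneg _

lemma trace_tmul_eq_zero {m : ℕ} (A : Matrix (Fin m) (Fin m) ℝ)
    (h : (Aᵀ * A).trace = 0) : A = 0 := by
  have h' : ∀ i ∈ Finset.univ, (Aᵀ * A).diag i = 0 := by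
    refine (Finset.sum_eq_zero_iff_of_nonneg ?_).mp h
    intro i _
    simp only [Matrix.diag_apply, Matrix.mul_apply, Matrix.transpose_apply]
    exact Finset.sum_nonneg fun j _ => mul_self_nonneg _
  ext i j
  have := h' j (Finset.mem_univ j)
  simp only [Matrix.diag_apply, Matrix.mul_apply, Matrix.transpose_apply] at this
  have := (Finset.sum_eq_zero_iff_of_nonneg (fun k _ => mul_self_nonneg (A k j))).mp this
    i (Finset.mem_univ i)
  have : A i j * A i j = 0 := this
  simpa using mul_self_eq_zero.mp this

lemma transpose_eq_of_herm {m : ℕ} {A : Matrix (Fin m) (Fin m) ℝ} (h : A.IsHermitian) :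
    Aᵀ = A := by
  rw [← Matrix.conjTranspose_eq_transpose_of_trivial]; exact h

open scoped MatrixOrder in
def Matrix.PosSemidef.sqrt {m : ℕ} {A : Matrix (Fin m) (Fin m) ℝ} (_ : A.PosSemidef) :
    Matrix (Fin m) (Fin m) ℝ := CFC.sqrt A

open scoped MatrixOrder in
lemma Matrix.PosSemidef.sqrt_mul_self {m : ℕ} {A : Matrix (Fin m) (Fin m) ℝ} (hA : A.PosSemidef) :
    hA.sqrt * hA.sqrt = A := CFC.sqrt_mul_sqrt_self A hA.nonneg

open scoped MatrixOrder in
lemma Matrix.PosSemidef.posSemidef_sqrt {m : ℕ} {A : Matrix (Fin m) (Fin m) ℝ} (hA : A.PosSemidef) :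
    hA.sqrt.PosSemidef := (CFC.sqrt_nonneg A).posSemidef

-- PSD anticommuting: AB + BA = 0 → AB = 0
lemma psd_anticomm {m : ℕ} {A B : Matrix (Fin m) (Fin m) ℝ}
    (hA : A.PosSemidef) (hB : B.PosSemidef) (h : A * B + B * A = 0) : A * B = 0 := by
  set P := hA.sqrt with hPdef
  set Q := hB.sqrt with hQdef
  have hP : P * P = A := hA.sqrt_mul_self
  have hQ : Q * Q = B := hB.sqrt_mul_self
  have hPt : Pᵀ = P := transpose_eq_of_herm hA.posSemidef_sqrt.1
  have hQt : Qᵀ = Q := transpose_eq_of_herm hB.posSemidef_sqrt.1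
  have htr : (A * B).trace = 0 := by
    have := congrArg Matrix.trace h
    rw [Matrix.trace_add, Matrix.trace_mul_comm B A, Matrix.trace_zero] at this
    linarith
  have h2 : ((P * Q)ᵀ * (P * Q)).trace = 0 := by
    rw [Matrix.transpose_mul, hPt, hQt]
    have : Q * P * (P * Q) = Q * (P * P * Q) := by noncomm_ring
    rw [this, hP, Matrix.trace_mul_comm, Matrix.mul_assoc, hQ]
    exact htr
  have hPQ : P * Q = 0 := trace_tmul_eq_zero _ h2
  calc A * B = P * (P * Q) * Q := by rw [← hP, ← hQ]; noncomm_ring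
    _ = 0 := by rw [hPQ]; simp

-- symmetric matrix anticommuting with PD matrix is zero
lemma pd_anticomm_symm {m : ℕ} {T W : Matrix (Fin m) (Fin m) ℝ}
    (hT : T.PosDef) (hW : Wᵀ = W) (h : T * W + W * T = 0) : W = 0 := by
  have hTW : T * W = 0 := by
    set P := hT.posSemidef.sqrt with hPdef
    have hP : P * P = T := hT.posSemidef.sqrt_mul_self
    have hPt : Pᵀ = P := transpose_eq_of_herm hT.posSemidef.posSemidef_sqrt.1
    have htr : (W * T * W).trace = 0 := by
      have h1 : T * W = -(W * T) := eq_neg_of_add_eq_zero_left h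
      have : (T * (W * W)).trace = (W * T * W).trace := by
        rw [Matrix.trace_mul_comm T (W * W), Matrix.mul_assoc, Matrix.trace_mul_comm W (W * T)]
      have h2 : (T * (W * W)).trace = -(W * T * W).trace := by
        have : T * (W * W) = -(W * T * W) := by
          calc T * (W * W) = (T * W) * W := by noncomm_ring
            _ = -(W * T) * W := by rw [h1]
            _ = -(W * T * W) := by noncomm_ring
        rw [this, Matrix.trace_neg]
      linarith
    have h3 : ((P * W)ᵀ * (P * W)).trace = 0 := by
      rw [Matrix.transpose_mul, hPt, hW]
      have : W * P * (P * W) = W * T * W := by rw [← hP]; noncomm_ring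
      rw [this]; exact htr
    have hPW : P * W = 0 := trace_tmul_eq_zero _ h3
    calc T * W = P * (P * W) := by rw [← hP]; noncomm_ring
      _ = 0 := by rw [hPW]; simp
  have hdet : IsUnit T.det := isUnit_iff_ne_zero.mpr (ne_of_gt hT.det_pos)
  calc W = T⁻¹ * (T * W) := by rw [← Matrix.mul_assoc, Matrix.nonsing_inv_mul T hdet, Matrix.one_mul]
    _ = 0 := by rw [hTW]; simp


lemma ker_trivial {m : ℕ} {Λ Gx : Matrix (Fin m) (Fin m) ℝ}
    (hΛ : Λ.PosSemidef) (hGx : Gx.PosSemidef) (hLG : Λ * Gx = 0)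
    (hsc : Gx.rank + Λ.rank = m) :
    ∀ v : Fin m → ℝ, Λ *ᵥ v = 0 → Gx *ᵥ v = 0 → v = 0 := by
  intro v hv1 hv2
  set s := LinearMap.range Λ.mulVecLin with hs
  set t := LinearMap.range Gx.mulVecLin with ht
  have hΛt : Λᵀ = Λ := transpose_eq_of_herm hΛ.1
  have hGt : Gxᵀ = Gx := transpose_eq_of_herm hGx.1
  have hdisj : s ⊓ t = ⊥ := by
    rw [Submodule.eq_bot_iff]
    rintro y ⟨⟨a, rfl⟩, ⟨b, hb⟩⟩
    have h0 : Λ.mulVecLin a ⬝ᵥ Λ.mulVecLin a = 0 := by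
      nth_rewrite 1 [← hb]
      show (Gx *ᵥ b) ⬝ᵥ (Λ *ᵥ a) = 0
      have h1 : Gx *ᵥ b = b ᵥ* Gx := by
        conv_lhs => rw [← hGt]
        rw [Matrix.mulVec_transpose]
      have h2 : Gx * Λ = 0 := by
        have := congrArg Matrix.transpose hLG
        rw [Matrix.transpose_mul, hΛt, hGt] at this
        simpa using this
      rw [Matrix.dotProduct_mulVec, h1, Matrix.vecMul_vecMul, h2]
      simp
    exact dotProduct_self_eq_zero.mp h0
  have hsup : s ⊔ t = ⊤ := by
    apply Submodule.eq_top_of_finrank_eq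
    have := Submodule.finrank_sup_add_finrank_inf_eq s t
    rw [hdisj] at this
    simp only [finrank_bot, add_zero] at this
    rw [this]
    show Λ.rank + Gx.rank = Module.finrank ℝ (Fin m → ℝ)
    rw [Module.finrank_fin_fun, add_comm]
    exact hsc
  have hv : v ∈ s ⊔ t := by rw [hsup]; trivial
  obtain ⟨p, hp, q, hq, hpq⟩ := Submodule.mem_sup.mp hv
  obtain ⟨a, rfl⟩ := hp
  obtain ⟨b, rfl⟩ := hq
  have h0 : v ⬝ᵥ v = 0 := by
    nth_rewrite 2 [← hpq]
    show v ⬝ᵥ (Λ *ᵥ a + Gx *ᵥ b) = 0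
    rw [dotProduct_add, Matrix.dotProduct_mulVec, Matrix.dotProduct_mulVec]
    have h1 : v ᵥ* Λ = 0 := by rw [← hΛt, Matrix.vecMul_transpose, hv1]
    have h2 : v ᵥ* Gx = 0 := by rw [← hGt, Matrix.vecMul_transpose, hv2]
    rw [h1, h2]; simp
  exact dotProduct_self_eq_zero.mp h0


theorem stmt9 {n m : ℕ} (f : (Fin n → ℝ) → ℝ) (G : (Fin n → ℝ) → Matrix (Fin m) (Fin m) ℝ)
    (hf : ContDiff ℝ 2 f) (hG : ∀ i j, ContDiff ℝ 2 fun y => G y i j)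
    (x : Fin n → ℝ) (Λ : Matrix (Fin m) (Fin m) ℝ)
    (hKKT : KKT1 f G x Λ) (hsc : (G x).rank + Λ.rank = m) :
    ∃ Y : Matrix (Fin m) (Fin m) ℝ, memPhi Λ Y ∧ KKT2 f G x Y Λ := by
  obtain ⟨h1, hΛ, hGx, hcomp⟩ := hKKT
  have hanti : Λ * G x + G x * Λ = 0 := by
    have h2 : (2:ℝ) • ((1/2:ℝ) • (Λ * G x + G x * Λ)) = 0 := by
      rw [show (1/2:ℝ) • (Λ * G x + G x * Λ) = jmul Λ (G x) from rfl, hcomp]; simp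
    rw [smul_smul] at h2; norm_num at h2; exact h2
  have hLG : Λ * G x = 0 := psd_anticomm hΛ hGx hanti
  have hΛt : Λᵀ = Λ := transpose_eq_of_herm hΛ.1
  have hGt : (G x)ᵀ = G x := transpose_eq_of_herm hGx.1
  set Y := hGx.sqrt with hYdef
  have hYY : Y * Y = G x := hGx.sqrt_mul_self
  have hYt : Yᵀ = Y := transpose_eq_of_herm hGx.posSemidef_sqrt.1
  have h3 : (((Λ * Y)ᵀ)ᵀ * (Λ * Y)ᵀ).trace = 0 := by
    rw [Matrix.transpose_transpose, Matrix.transpose_mul, hYt, hΛt]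
    have e : Λ * Y * (Y * Λ) = Λ * G x * Λ := by rw [← hYY]; noncomm_ring
    rw [e, hLG, Matrix.zero_mul, Matrix.trace_zero]
  have h4 : (Λ * Y)ᵀ = 0 := trace_tmul_eq_zero _ h3
  have hLY : Λ * Y = 0 := by
    have := congrArg Matrix.transpose h4
    rwa [Matrix.transpose_transpose, Matrix.transpose_zero] at this
  have hYL : Y * Λ = 0 := by
    have := congrArg Matrix.transpose hLY
    rwa [Matrix.transpose_mul, hYt, hΛt, Matrix.transpose_zero] at this
  refine ⟨Y, ?_, h1, ?_, ?_⟩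
  · -- memPhi
    intro W hWs hWne hjm
    have hWt : Wᵀ = W := hWs
    have hYW : Y * W + W * Y = 0 := by
      have h2 : (2:ℝ) • ((1/2:ℝ) • (Y * W + W * Y)) = 0 := by
        rw [show (1/2:ℝ) • (Y * W + W * Y) = jmul Y W from rfl, hjm]; simp
      rw [smul_smul] at h2; norm_num at h2; exact h2
    have hjWW : jmul W W = W * W := by
      show (1/2:ℝ) • (W * W + W * W) = W * W
      rw [← two_smul ℝ (W * W), smul_smul]; norm_num
    show 0 < minner (jmul W W) Λ
    rw [hjWW]
    show 0 < (W * W * Λ).trace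
    set Q := hΛ.sqrt with hQdef
    have hQQ : Q * Q = Λ := hΛ.sqrt_mul_self
    have hQt : Qᵀ = Q := transpose_eq_of_herm hΛ.posSemidef_sqrt.1
    have key : (W * W * Λ).trace = ((Q * W)ᵀ * (Q * W)).trace := by
      rw [Matrix.transpose_mul, hQt, hWt]
      have e : W * Q * (Q * W) = W * Λ * W := by rw [← hQQ]; noncomm_ring
      rw [e, Matrix.mul_assoc W W Λ, Matrix.trace_mul_comm W (W * Λ), Matrix.mul_assoc]
    rw [key]
    rcases (trace_tmul_nonneg (Q * W)).lt_or_eq with hpos | heq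
    · exact hpos
    · exfalso
      have hQW : Q * W = 0 := trace_tmul_eq_zero _ heq.symm
      have hWQ : W * Q = 0 := by
        have := congrArg Matrix.transpose hQW
        rwa [Matrix.transpose_mul, hQt, hWt, Matrix.transpose_zero] at this
      set T := Y + Q with hTdef
      have hanti2 : T * W + W * T = 0 := by
        rw [hTdef]
        rw [Matrix.add_mul, Matrix.mul_add, hQW, hWQ]
        rw [show Y * W + 0 + (W * Y + 0) = Y * W + W * Y by abel, hYW]
      have hT : T.PosDef := by
        refine PosDef.of_dotProduct_mulVec_pos (hGx.posSemidef_sqrt.1.add hΛ.posSemidef_sqrt.1) fun v hv => ?_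
        have hstar : star v = v := by ext i; simp
        have hYv : 0 ≤ star v ⬝ᵥ Y *ᵥ v := (posSemidef_iff_dotProduct_mulVec.mp hGx.posSemidef_sqrt).2 v
        have hQv : 0 ≤ star v ⬝ᵥ Q *ᵥ v := (posSemidef_iff_dotProduct_mulVec.mp hΛ.posSemidef_sqrt).2 v
        have hsum : star v ⬝ᵥ T *ᵥ v = star v ⬝ᵥ Y *ᵥ v + star v ⬝ᵥ Q *ᵥ v := by
          rw [hTdef, Matrix.add_mulVec, dotProduct_add]
        rcases lt_or_eq_of_le (le_of_eq rfl : (0:ℝ) ≤ 0) with h | _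
        · exact absurd h (lt_irrefl 0)
        rcases lt_or_eq_of_le (add_nonneg hYv hQv) with h | h
        · rw [hsum]; exact h
        · exfalso
          have hY0 : star v ⬝ᵥ Y *ᵥ v = 0 := by linarith
          have hQ0 : star v ⬝ᵥ Q *ᵥ v = 0 := by linarith
          have hYv0 : Y *ᵥ v = 0 := (hGx.posSemidef_sqrt.dotProduct_mulVec_zero_iff v).mp hY0
          have hQv0 : Q *ᵥ v = 0 := (hΛ.posSemidef_sqrt.dotProduct_mulVec_zero_iff v).mp hQ0
          have hGv : G x *ᵥ v = 0 := by
            rw [← hYY, ← Matrix.mulVec_mulVec, hYv0, Matrix.mulVec_zero]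
          have hLv : Λ *ᵥ v = 0 := by
            rw [← hQQ, ← Matrix.mulVec_mulVec, hQv0, Matrix.mulVec_zero]
          exact hv (ker_trivial hΛ hGx hLG hsc v hLv hGv)
      exact hWne (pd_anticomm_symm hT hWt hanti2)
  · -- jmul Λ Y = 0
    show (1/2:ℝ) • (Λ * Y + Y * Λ) = 0
    rw [hLY, hYL]; simp
  · -- G x = jmul Y Y
    show G x = (1/2:ℝ) • (Y * Y + Y * Y)
    rw [hYY, ← two_smul ℝ (G x), smul_smul]; norm_num
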